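/- arXiv:0807.1593 — 7 statements merged into one kernel-verified Lean document; each statement's English description precedes it below -/
import Mathlib

section
/- Let X be a set, h : X × X → ℝ satisfy the triangle inequality, and let u, v : X → ℝ both satisfy f(y) − f(x) ≤ h(x,y) for all x, y (for f = u and f = v). Let θ : ℝ → ℝ be a nondecreasing 1-Lipschitz function. Then w := u + θ ∘ (v − u) also satisfies w(y) − w(x) ≤ h(x,y) for all x, y. -/
theorem stmt_3 {X : Type*} (h : X → X → ℝ) (u v : X → ℝ) (θ : ℝ → ℝ)
    (htri : ∀ x y z, h x z ≤ h x y + h y z)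
    (hu : ∀ x y, u y - u x ≤ h x y)
    (hv : ∀ x y, v y - v x ≤ h x y)
    (hθmono : Monotone θ)
    (hθlip : ∀ s t : ℝ, |θ s - θ t| ≤ |s - t|)
    (w : X → ℝ) (hw : ∀ x, w x = u x + θ (v x - u x)) :
    ∀ x y, w y - w x ≤ h x y := by
  intro x y
  rw [hw, hw]
  rcases le_or_gt (θ (v y - u y)) (θ (v x - u x)) with hc | hc
  · have := hu x y; linarith
  · have hl := hθlip (v y - u y) (v x - u x)
    rw [abs_le] at hl
    have habs : θ (v y - u y) - θ (v x - u x) ≤ |v y - u y - (v x - u x)| := hl.2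
    have : v y - u y - (v x - u x) > 0 := by
      by_contra hcon
      push_neg at hcon
      exact absurd (hθmono (by linarith : v y - u y ≤ v x - u x)) (not_le.mpr hc)
    rw [abs_of_pos this] at habs
    have := hv x y; linarith
end

section
/- Let A ⊆ ℝ be a measurable set of positive Lebesgue measure, and let θ(t) = ∫₀ᵗ 1_A(s) ds be a primitive of the indicator of A. Then θ is nondecreasing and 1-Lipschitz, and the image θ(A) has positive Lebesgue measure. -/
open MeasureTheory
open scoped ENNReal NNReal

theorem stmt_5 (A : Set ℝ) (hA : MeasurableSet A) (hpos : 0 < volume A)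
    (θ : ℝ → ℝ)
    (hθ : ∀ t, θ t = ∫ s in (0 : ℝ)..t, A.indicator (fun _ => (1 : ℝ)) s) :
    Monotone θ ∧ LipschitzWith 1 θ ∧ 0 < volume (θ '' A) := by
  set f : ℝ → ℝ := A.indicator (fun _ => (1 : ℝ)) with hfdef
  have hmeasf : Measurable f := measurable_const.indicator hA
  have hint : ∀ a b : ℝ, IntervalIntegrable f volume a b := by
    intro a b
    have h1 : IntegrableOn f (Set.uIcc a b) volume := by
      refine Integrable.mono' (g := fun _ => (1:ℝ)) (integrableOn_const isCompact_uIcc.measure_lt_top.ne)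
        hmeasf.aestronglyMeasurable.restrict ?_
      filter_upwards with x
      by_cases hx : x ∈ A <;> simp [hfdef, Set.indicator_apply, hx]
    exact h1.intervalIntegrable
  have hfin : ∀ a b : ℝ, volume (A ∩ Set.Ioc a b) < ⊤ :=
    fun a b => lt_of_le_of_lt (measure_mono Set.inter_subset_right)
      (by rw [Real.volume_Ioc]; exact ENNReal.ofReal_lt_top)
  have key : ∀ a b : ℝ, a ≤ b → θ b - θ a = (volume (A ∩ Set.Ioc a b)).toReal := by
    intro a b hab
    rw [hθ a, hθ b, intervalIntegral.integral_interval_sub_left (hint 0 b) (hint 0 a),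
      intervalIntegral.integral_of_le hab]
    rw [show (∫ s in Set.Ioc a b, f s) = ∫ s in Set.Ioc a b ∩ A, (1 : ℝ) from
      setIntegral_indicator hA]
    rw [setIntegral_const, Set.inter_comm]
    simp
    rfl
  have hmono : Monotone θ := by
    intro a b hab
    have := key a b hab
    have h0 : (0 : ℝ) ≤ (volume (A ∩ Set.Ioc a b)).toReal := ENNReal.toReal_nonneg
    linarith
  have hd : ∀ a b : ℝ, a ≤ b → θ b - θ a ≤ b - a := by
    intro a b hab
    rw [key a b hab]
    calc (volume (A ∩ Set.Ioc a b)).toReal ≤ (volume (Set.Ioc a b)).toReal := by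
          apply ENNReal.toReal_mono
          · rw [Real.volume_Ioc]; exact ENNReal.ofReal_ne_top
          · exact measure_mono Set.inter_subset_right
      _ = b - a := by rw [Real.volume_Ioc, ENNReal.toReal_ofReal (by linarith)]
  have hlip : LipschitzWith 1 θ := by
    apply LipschitzWith.of_dist_le_mul
    intro x y
    rw [NNReal.coe_one, one_mul, Real.dist_eq, Real.dist_eq]
    rcases le_total x y with h | h
    · have h1 := hd x y h
      have h2 : θ x ≤ θ y := hmono h
      rw [abs_of_nonpos (by linarith), abs_of_nonpos (by linarith)]
      linarith
    · have h1 := hd y x h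
      have h2 : θ y ≤ θ x := hmono h
      rw [abs_of_nonneg (by linarith), abs_of_nonneg (by linarith)]
      linarith
  refine ⟨hmono, hlip, ?_⟩
  -- identify the Stieltjes measure of θ with volume.restrict A
  have hcont : Continuous θ := hlip.continuous
  have hst : ∀ x, hmono.stieltjesFunction x = θ x := by
    intro x
    rw [hmono.stieltjesFunction_eq]
    exact hmono.continuousWithinAt_Ioi_iff_rightLim_eq.mp hcont.continuousWithinAt
  have hmeq : hmono.stieltjesFunction.measure = volume.restrict A := by
    refine Measure.ext_of_Ioc _ _ (fun a b hab => ?_)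
    rw [StieltjesFunction.measure_Ioc, hst, hst, key a b hab.le,
      Measure.restrict_apply measurableSet_Ioc, Set.inter_comm (Set.Ioc a b) A,
      ENNReal.ofReal_toReal (hfin a b).ne]
  have hae : ∀ᵐ x, x ∉ A → HasDerivAt θ 0 x := by
    filter_upwards [hmono.ae_hasDerivAt, Measure.rnDeriv_restrict_self volume hA]
      with x hx h2 hxA
    rw [hmeq, h2] at hx
    simpa [Set.indicator_of_notMem hxA] using hx
  -- image of sets disjoint from A under θ is null
  have himg : ∀ s : Set ℝ, Disjoint s A → volume (θ '' s) = 0 := by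
    intro s hs
    set E : Set ℝ := {x | x ∉ A → HasDerivAt θ 0 x} with hEdef
    have hEc : volume Eᶜ = 0 := by
      have h' : ∀ᵐ x, x ∈ E := hae
      simpa [ae_iff, hEdef, Set.compl_setOf] using h'
    have h1 : volume (θ '' (s ∩ E)) = 0 := by
      refine addHaar_image_eq_zero_of_det_fderivWithin_eq_zero volume
        (s := s ∩ E) (f := θ)
        (f' := fun _ => ContinuousLinearMap.smulRight (1 : ℝ →L[ℝ] ℝ) (0 : ℝ)) ?_ ?_
      · intro x hx
        have hxA : x ∉ A := Set.disjoint_left.mp hs hx.1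
        exact (hx.2 hxA).hasFDerivAt.hasFDerivWithinAt
      · intro x _
        simp [ContinuousLinearMap.det_toSpanSingleton]
    have h2 : volume (θ '' (s \ E)) = 0 := by
      have hnull : volume (s \ E) = 0 := measure_mono_null (fun x hx => hx.2) hEc
      have himle := hlip.hausdorffMeasure_image_le zero_le_one (s \ E)
      rw [MeasureTheory.hausdorffMeasure_real, hnull, mul_zero] at himle
      exact le_antisymm himle (zero_le)
    have hsub : θ '' s ⊆ θ '' (s ∩ E) ∪ θ '' (s \ E) := by
      rw [← Set.image_union, Set.inter_union_diff]
    exact measure_mono_null hsub (measure_union_null h1 h2)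
  -- choose a bounded piece of A with positive measure
  obtain ⟨n, hn⟩ : ∃ n : ℕ, 0 < volume (A ∩ Set.Ioc (-(n : ℝ)) n) := by
    by_contra h
    push_neg at h
    simp only [nonpos_iff_eq_zero] at h
    have hcover : A ⊆ ⋃ n : ℕ, A ∩ Set.Ioc (-(n : ℝ)) n := by
      intro x hx
      obtain ⟨n, hn⟩ := exists_nat_gt |x|
      obtain ⟨h1, h2⟩ := abs_lt.mp hn
      exact Set.mem_iUnion.2 ⟨n, hx, h1, h2.le⟩
    exact absurd (measure_mono_null hcover (measure_iUnion_null h)) hpos.ne'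
  -- conclude
  have hnn : (-(n : ℝ)) ≤ n := le_trans (neg_nonpos.mpr (Nat.cast_nonneg n)) (Nat.cast_nonneg n)
  have hIcc : Set.Icc (θ (-(n : ℝ))) (θ n) ⊆ θ '' Set.Icc (-(n : ℝ)) n :=
    intermediate_value_Icc hnn hcont.continuousOn
  have hzero : volume (θ '' (Set.Icc (-(n : ℝ)) n \ A)) = 0 :=
    himg _ (Set.disjoint_left.mpr fun x hx => hx.2)
  have hchain : volume (Set.Icc (θ (-(n : ℝ))) (θ n)) ≤ volume (θ '' (A ∩ Set.Icc (-(n : ℝ)) n)) := by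
    calc volume (Set.Icc (θ (-(n : ℝ))) (θ n)) ≤ volume (θ '' Set.Icc (-(n : ℝ)) n) :=
          measure_mono hIcc
      _ ≤ volume (θ '' (A ∩ Set.Icc (-(n : ℝ)) n) ∪ θ '' (Set.Icc (-(n : ℝ)) n \ A)) := by
          apply measure_mono
          rw [← Set.image_union]
          apply Set.image_mono
          intro x hx
          by_cases hxA : x ∈ A
          · exact Or.inl ⟨hxA, hx⟩
          · exact Or.inr ⟨hx, hxA⟩
      _ ≤ volume (θ '' (A ∩ Set.Icc (-(n : ℝ)) n)) + volume (θ '' (Set.Icc (-(n : ℝ)) n \ A)) :=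
          measure_union_le _ _
      _ = volume (θ '' (A ∩ Set.Icc (-(n : ℝ)) n)) := by rw [hzero, add_zero]
  have hlen : volume (Set.Icc (θ (-(n : ℝ))) (θ n)) = volume (A ∩ Set.Ioc (-(n : ℝ)) n) := by
    rw [Real.volume_Icc, key _ _ hnn,
      ENNReal.ofReal_toReal (hfin _ _).ne]
  calc (0 : ℝ≥0∞) < volume (A ∩ Set.Ioc (-(n : ℝ)) n) := hn
    _ = volume (Set.Icc (θ (-(n : ℝ))) (θ n)) := hlen.symm
    _ ≤ volume (θ '' (A ∩ Set.Icc (-(n : ℝ)) n)) := hchain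
    _ ≤ volume (θ '' A) := measure_mono (Set.image_mono Set.inter_subset_left)
end

section
/- Let X be a compact metric space with a continuous semi-flow φ, and let Y ⊆ X be a compact positively invariant subset such that every orbit of X eventually enters Y, in the sense that X_∞ := ⋂_{k∈ℕ} φᵏ(X) ⊆ Y. Then every chain recurrent point of (X, φ) lies in X_∞. -/
/-- An `(ε,T)`-chain of the semi-flow `φ` from `x` to `y`: finitely many flow
segments of duration at least `T`, separated by jumps of size at most `ε`. -/
def IsETChain {X : Type*} [MetricSpace X] (φ : ℝ → X → X) (ε T : ℝ) (x y : X) : Prop :=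
  ∃ (n : ℕ) (p : Fin (n + 2) → X) (τ : Fin (n + 1) → ℝ),
    p 0 = x ∧ p (Fin.last (n + 1)) = y ∧
    (∀ i, T ≤ τ i) ∧
    (∀ i : Fin (n + 1), dist (φ (τ i) (p i.castSucc)) (p i.succ) ≤ ε)

/-- The chain relation: `x C y` iff for every `ε > 0` and `T > 0` there is an
`(ε,T)`-chain from `x` to `y`. -/
def ChainRel {X : Type*} [MetricSpace X] (φ : ℝ → X → X) (x y : X) : Prop :=
  ∀ ε > 0, ∀ T > 0, IsETChain φ ε T x y

theorem stmt_13 {X : Type*} [MetricSpace X] [CompactSpace X]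
    (φ : ℝ → X → X)
    (hcont : Continuous (fun q : ℝ × X => φ q.1 q.2))
    (hzero : ∀ x, φ 0 x = x)
    (hadd : ∀ s t : ℝ, 0 ≤ s → 0 ≤ t → ∀ x, φ (s + t) x = φ s (φ t x))
    (Y : Set X) (hYc : IsCompact Y)
    (hYinv : ∀ t : ℝ, 0 ≤ t → ∀ y ∈ Y, φ t y ∈ Y)
    (Xinf : Set X) (hXinf : Xinf = ⋂ k : ℕ, φ k '' Set.univ)
    (hYabs : Xinf ⊆ Y) :
    ∀ x : X, ChainRel φ x x → x ∈ Xinf := by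
  intro x hx
  subst hXinf
  simp only [Set.mem_iInter]
  intro k
  have hc : Continuous (fun y : X => φ (k : ℝ) y) :=
    hcont.comp (continuous_const.prodMk continuous_id)
  have hS : IsCompact (φ (k : ℝ) '' Set.univ) := isCompact_univ.image hc
  have hcl : IsClosed (φ (k : ℝ) '' Set.univ) := hS.isClosed
  rw [← hcl.closure_eq, Metric.mem_closure_iff]
  intro ε hε
  obtain ⟨n, p, τ, hp0, hpl, hT, hd⟩ :=
    hx (ε / 2) (by positivity) ((k : ℝ) + 1) (by positivity)
  set L : Fin (n + 1) := Fin.last n with hL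
  have hτ : (k : ℝ) ≤ τ L := le_trans (by linarith) (hT L)
  refine ⟨φ (τ L) (p L.castSucc), ⟨φ (τ L - k) (p L.castSucc), Set.mem_univ _, ?_⟩, ?_⟩
  · rw [← hadd (k : ℝ) (τ L - k) (by positivity) (by linarith)]
    ring_nf
  · have hsucc : p L.succ = x := by
      have : L.succ = Fin.last (n + 1) := by
        simp [hL, Fin.succ_last]
      rw [this, hpl]
    have := hd L
    rw [hsucc] at this
    rw [dist_comm]
    linarith
end

section
/- Let X be a compact metric space with a continuous semi-flow φ, and let w : X → ℝ be continuous and nonincreasing along orbits (w(φᵗ(x)) ≤ w(x) for all t ≥ 0, x ∈ X). Suppose a < b are real numbers and T > 0 satisfy φᵀ({w ≤ b}) ⊆ {w ≤ a}. Then there exists ε > 0 such that no (ε,T)-chain starting at a point x with w(x) ≤ a can end at a point y with w(y) ≥ b. In particular, if w(x) < a < b < w(y) then x does not chain-connect to y in X. -/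
theorem stmt_14 {X : Type*} [MetricSpace X] [CompactSpace X]
    (φ : ℝ → X → X)
    (hcont : Continuous (fun q : ℝ × X => φ q.1 q.2))
    (hzero : ∀ x, φ 0 x = x)
    (hadd : ∀ s t : ℝ, 0 ≤ s → 0 ≤ t → ∀ x, φ (s + t) x = φ s (φ t x))
    (w : X → ℝ) (hwcont : Continuous w)
    (hwdec : ∀ t : ℝ, 0 ≤ t → ∀ x, w (φ t x) ≤ w x)
    (a b : ℝ) (hab : a < b) (T : ℝ) (hT : 0 < T)
    (hTab : ∀ x, w x ≤ b → w (φ T x) ≤ a) :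
    (∃ ε > 0, ∀ x y : X, w x ≤ a → b ≤ w y → ¬ IsETChain φ ε T x y) ∧
    (∀ x y : X, w x < a → b < w y → ¬ ChainRel φ x y) := by
  -- uniform continuity of w
  have huc : UniformContinuous w := CompactSpace.uniformContinuous_of_continuous hwcont
  rw [Metric.uniformContinuous_iff] at huc
  obtain ⟨δ, hδ, hδ'⟩ := huc ((b - a) / 2) (by linarith)
  set m : ℝ := (a + b) / 2 with hm
  have key : ∀ x y : X, w x ≤ a → b ≤ w y → ¬ IsETChain φ (δ / 2) T x y := by
    intro x y hx hy ⟨n, p, τ, hp0, hpl, hτ, hjump⟩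
    -- invariant: w (p i) ≤ m
    have inv : ∀ i : Fin (n + 2), w (p i) ≤ m := by
      intro i
      induction i using Fin.induction with
      | zero => rw [hp0]; simp only [hm]; linarith
      | succ i ih =>
        have hflow : w (φ (τ i) (p i.castSucc)) ≤ a := by
          have h2 : φ (τ i) (p i.castSucc) = φ (τ i - T) (φ T (p i.castSucc)) := by
            have h3 := hadd (τ i - T) T (by linarith [hτ i]) hT.le (p i.castSucc)
            rwa [show τ i - T + T = τ i from by ring] at h3
          rw [h2]
          calc w (φ (τ i - T) (φ T (p i.castSucc))) ≤ w (φ T (p i.castSucc)) :=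
                hwdec _ (by linarith [hτ i]) _
            _ ≤ a := hTab _ (by linarith [ih])
        have hd : dist (φ (τ i) (p i.castSucc)) (p i.succ) < δ := by
          have := hjump i; linarith
        have := hδ' hd
        rw [Real.dist_eq, abs_lt] at this
        simp only [hm]; linarith
    have := inv (Fin.last (n + 1))
    rw [hpl] at this
    simp only [hm] at this; linarith
  refine ⟨⟨δ / 2, by linarith, key⟩, ?_⟩
  intro x y hx hy hcr
  exact key x y hx.le hy.le (hcr (δ / 2) (by linarith) T hT)
end

section
/- Let X be a compact metric space with a continuous semi-flow φ. Let x_k : [0, T_k] → X be a sequence of (ε_k, T'_k)-chains of φ with ε_k → 0 and T'_k → ∞, such that x_k(0) → x and x_k(T_k) → y. Then x C y, i.e., for every ε > 0 and T > 0 there exists an (ε,T)-chain from x to y. -/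
theorem stmt_15 {X : Type*} [MetricSpace X] [CompactSpace X]
    (φ : ℝ → X → X)
    (hcont : Continuous (fun q : ℝ × X => φ q.1 q.2))
    (hzero : ∀ x, φ 0 x = x)
    (hadd : ∀ s t : ℝ, 0 ≤ s → 0 ≤ t → ∀ x, φ (s + t) x = φ s (φ t x))
    (ε T : ℕ → ℝ) (a b : ℕ → X) (x y : X)
    (hchain : ∀ k, IsETChain φ (ε k) (T k) (a k) (b k))
    (hε : Filter.Tendsto ε Filter.atTop (nhds 0))
    (hT : Filter.Tendsto T Filter.atTop Filter.atTop)
    (ha : Filter.Tendsto a Filter.atTop (nhds x))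
    (hb : Filter.Tendsto b Filter.atTop (nhds y)) :
    ChainRel φ x y := by
  intro e he Tt hTt
  -- uniform continuity of `φ Tt` on the compact space `X`
  have hcφ : Continuous (fun u : X => φ Tt u) :=
    hcont.comp (Continuous.prodMk_right Tt)
  have huc : UniformContinuous (fun u : X => φ Tt u) :=
    CompactSpace.uniformContinuous_of_continuous hcφ
  obtain ⟨δ, hδ, hδ2⟩ := Metric.uniformContinuous_iff.mp huc (e / 2) (by linarith)
  -- choose a suitable index k
  have h1 : ∀ᶠ k in Filter.atTop, ε k ≤ e / 2 :=
    (hε.eventually (gt_mem_nhds (show (0:ℝ) < e / 2 by linarith))).mono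
      fun k hk => le_of_lt hk
  have h2 : ∀ᶠ k in Filter.atTop, 2 * Tt ≤ T k := hT.eventually_ge_atTop _
  have h3 : ∀ᶠ k in Filter.atTop, dist (a k) x < δ :=
    Metric.tendsto_nhds.mp ha δ hδ
  have h4 : ∀ᶠ k in Filter.atTop, dist (b k) y ≤ e / 2 :=
    (Metric.tendsto_nhds.mp hb (e / 2) (by linarith)).mono fun k hk => le_of_lt hk
  obtain ⟨k, ⟨⟨hk1, hk2⟩, hk3⟩, hk4⟩ := (((h1.and h2).and h3).and h4).exists
  obtain ⟨n, p, τ, hp0, hpl, hτ, hjump⟩ := hchain k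
  have hTt0 : (0:ℝ) ≤ Tt := le_of_lt hTt
  have hτ0T : Tt ≤ τ 0 - Tt := by have := hτ 0; linarith
  have hτ0nn : (0:ℝ) ≤ τ 0 - Tt := by linarith
  -- the modified chain
  set c : X := φ Tt (a k) with hc
  set p' : Fin (n + 2) → X :=
    Function.update (Function.update p 0 c) (Fin.last (n + 1)) y with hp'
  set τ' : Fin (n + 1) → ℝ := Function.update τ 0 (τ 0 - Tt) with hτ'
  have hlast_ne : (Fin.last (n + 1)) ≠ 0 := by
    simp [Fin.ext_iff]
  have hp'0 : p' 0 = c := by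
    simp [hp', Function.update_of_ne hlast_ne.symm]
  have hp'last : p' (Fin.last (n + 1)) = y := by
    simp [hp']
  refine ⟨n + 1, Fin.cons x p', Fin.cons Tt τ', ?_, ?_, ?_, ?_⟩
  · rfl
  · rw [show (Fin.last (n + 2)) = (Fin.last (n + 1)).succ from (Fin.succ_last _).symm,
      Fin.cons_succ, hp'last]
  · intro i
    refine Fin.cases ?_ (fun j => ?_) i
    · simp
    · rw [Fin.cons_succ]
      rcases eq_or_ne j 0 with rfl | hj
      · simpa [hτ'] using hτ0T
      · rw [hτ', Function.update_of_ne hj]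
        have := hτ j; linarith
  · -- jump estimates
    have key : ∀ j : Fin (n + 1), dist (φ (τ' j) (p' j.castSucc)) (p j.succ) ≤ ε k := by
      intro j
      rcases eq_or_ne j 0 with rfl | hj
      · have hcs : (0 : Fin (n + 1)).castSucc = (0 : Fin (n + 2)) := rfl
        rw [hcs, hp'0, hτ', Function.update_self, hc, ← hadd _ _ hτ0nn hTt0,
          sub_add_cancel, ← hp0]
        exact hjump 0
      · have hcs0 : j.castSucc ≠ 0 := by
          intro h; exact hj (Fin.ext (by simpa using congrArg Fin.val h))
        have hcsl : j.castSucc ≠ Fin.last (n + 1) := ne_of_lt (Fin.castSucc_lt_last j)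
        rw [hτ', Function.update_of_ne hj, hp', Function.update_of_ne hcsl,
          Function.update_of_ne hcs0]
        exact hjump j
    have key2 : ∀ j : Fin (n + 1), dist (p j.succ) (p' j.succ) ≤ e / 2 := by
      intro j
      rcases eq_or_ne j.succ (Fin.last (n + 1)) with hjl | hjl
      · rw [hjl, hp'last, hpl]
        exact hk4
      · rw [hp', Function.update_of_ne hjl, Function.update_of_ne (Fin.succ_ne_zero j)]
        simp only [dist_self]
        linarith
    intro i
    refine Fin.cases ?_ (fun j => ?_) i
    · have h : dist (φ Tt x) (φ Tt (a k)) < e / 2 := hδ2 (by rw [dist_comm]; exact hk3)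
      simp only [Fin.castSucc_zero, Fin.succ_zero_eq_one, Fin.cons_zero]
      have h1' : (Fin.cons x p' : Fin (n + 3) → X) 1 = p' 0 := rfl
      rw [h1', hp'0, hc]
      linarith
    · rw [Fin.cons_succ, ← Fin.succ_castSucc, Fin.cons_succ, Fin.cons_succ]
      calc dist (φ (τ' j) (p' j.castSucc)) (p' j.succ)
          ≤ dist (φ (τ' j) (p' j.castSucc)) (p j.succ) + dist (p j.succ) (p' j.succ) :=
            dist_triangle _ _ _
        _ ≤ ε k + e / 2 := add_le_add (key j) (key2 j)
        _ ≤ e := by linarith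
end

section
/- Let X be a set, h : X × X → ℝ satisfy the triangle inequality, and u : X → ℝ satisfy u(y) − u(x) ≤ h(x,y) for all x,y. Define x R y ⟺ u(y) − u(x) = h(x,y), and let A = {x : h(x,x) = 0}. Then for all x, y: (x R y and y R x) holds if and only if (x ∈ A, y ∈ A, and h(x,y) + h(y,x) = 0). -/
theorem stmt_16 {X : Type*} (h : X → X → ℝ) (u : X → ℝ)
    (htri : ∀ x y z, h x z ≤ h x y + h y z)
    (hdom : ∀ x y, u y - u x ≤ h x y)
    (A : Set X) (hA : A = {x | h x x = 0}) :
    ∀ x y : X,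
      ((u y - u x = h x y) ∧ (u x - u y = h y x)) ↔
      (x ∈ A ∧ y ∈ A ∧ h x y + h y x = 0) := by
  subst hA
  intro x y
  constructor
  · rintro ⟨h1, h2⟩
    have hsum : h x y + h y x = 0 := by linarith
    have hxx : h x x = 0 :=
      le_antisymm (by have := htri x y x; linarith) (by have := hdom x x; linarith)
    have hyy : h y y = 0 :=
      le_antisymm (by have := htri y x y; linarith) (by have := hdom y y; linarith)
    exact ⟨hxx, hyy, hsum⟩
  · rintro ⟨-, -, hsum⟩
    have h1 := hdom x y
    have h2 := hdom y x
    constructor <;> linarith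
end

section
/- Let X be a compact metric space with a continuous flow φ (defined for all t ∈ ℝ). If x C y for the chain relation, then φᵗ(x) C φˢ(y) for all real t and s (not merely nonnegative ones). -/
theorem stmt_19 {X : Type*} [MetricSpace X] [CompactSpace X]
    (φ : ℝ → X → X)
    (hcont : Continuous (fun q : ℝ × X => φ q.1 q.2))
    (hzero : ∀ x, φ 0 x = x)
    (hadd : ∀ s t : ℝ, ∀ x, φ (s + t) x = φ s (φ t x))
    (x y : X) (hxy : ChainRel φ x y) :
    ∀ t s : ℝ, ChainRel φ (φ t x) (φ s y) := by
  intro t s ε hε T hT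
  have hconts : Continuous (fun z : X => φ s z) :=
    hcont.comp (Continuous.prodMk_right s)
  have huc : UniformContinuous (fun z : X => φ s z) :=
    CompactSpace.uniformContinuous_of_continuous hconts
  obtain ⟨δ, hδ0, hδ⟩ := Metric.uniformContinuous_iff.mp huc ε hε
  set ε' : ℝ := min (δ / 2) ε with hε'def
  have hε'0 : 0 < ε' := lt_min (by linarith) hε
  have hε'ε : ε' ≤ ε := min_le_right _ _
  have hε'δ : ε' < δ := lt_of_le_of_lt (min_le_left _ _) (by linarith)
  have hT'0 : 0 < T + |t| + |s| := by positivity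
  obtain ⟨n, p, τ, hp0, hpl, hτ, hjump⟩ := hxy ε' hε'0 (T + |t| + |s|) hT'0
  refine ⟨n,
    fun i => if i = 0 then φ t x else if i = Fin.last (n + 1) then φ s y else p i,
    fun i => τ i + (if i = 0 then -t else 0) + (if i = Fin.last n then s else 0),
    ?_, ?_, ?_, ?_⟩
  · simp
  · have : (Fin.last (n + 1) : Fin (n + 2)) ≠ 0 := by
      simp [Fin.ext_iff]
    simp [this]
  · intro i
    dsimp only
    have h1 := hτ i
    have h2 := abs_nonneg t
    have h3 := abs_nonneg s
    have h4 := neg_abs_le t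
    have h5 := neg_abs_le s
    have h6 := le_abs_self t
    have h7 := le_abs_self s
    split_ifs <;> linarith
  · intro i
    dsimp only
    have hcs0 : i.castSucc = 0 ↔ i = 0 := Fin.castSucc_eq_zero_iff
    have hcsl : i.castSucc ≠ Fin.last (n + 1) := (Fin.castSucc_lt_last i).ne
    have hs0 : i.succ ≠ 0 := Fin.succ_ne_zero i
    have hsl : i.succ = Fin.last (n + 1) ↔ i = Fin.last n := by
      simp [Fin.ext_iff]
    by_cases hi0 : i = 0 <;> by_cases hil : i = Fin.last n
    · rw [if_pos hi0, if_pos hil, if_pos (hcs0.mpr hi0), if_neg hs0,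
        if_pos (hsl.mpr hil)]
      have heq : φ (τ i + -t + s) (φ t x) = φ s (φ (τ i) x) := by
        rw [← hadd (τ i + -t + s) t x, show τ i + -t + s + t = s + τ i by ring, hadd]
      rw [heq]
      have hpx : p i.castSucc = x := by rw [hcs0.mpr hi0, hp0]
      have hpy : p i.succ = y := by rw [hsl.mpr hil, hpl]
      have hj := hjump i
      rw [hpx, hpy] at hj
      exact le_of_lt (hδ (lt_of_le_of_lt hj hε'δ))
    · rw [if_pos hi0, if_neg hil, if_pos (hcs0.mpr hi0), if_neg hs0,
        if_neg (fun h => hil (hsl.mp h))]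
      have heq : φ (τ i + -t + 0) (φ t x) = φ (τ i) x := by
        rw [← hadd (τ i + -t + 0) t x, show τ i + -t + 0 + t = τ i by ring]
      rw [heq]
      have hpx : p i.castSucc = x := by rw [hcs0.mpr hi0, hp0]
      have hj := hjump i
      rw [hpx] at hj
      exact le_trans hj hε'ε
    · rw [if_neg hi0, if_pos hil, if_neg (fun h => hi0 (hcs0.mp h)), if_neg hcsl,
        if_neg hs0, if_pos (hsl.mpr hil)]
      have heq : φ (τ i + 0 + s) (p i.castSucc) = φ s (φ (τ i) (p i.castSucc)) := by
        rw [show τ i + 0 + s = s + τ i by ring, hadd]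
      rw [heq]
      have hpy : p i.succ = y := by rw [hsl.mpr hil, hpl]
      have hj := hjump i
      rw [hpy] at hj
      exact le_of_lt (hδ (lt_of_le_of_lt hj hε'δ))
    · rw [if_neg hi0, if_neg hil, if_neg (fun h => hi0 (hcs0.mp h)), if_neg hcsl,
        if_neg hs0, if_neg (fun h => hil (hsl.mp h))]
      rw [show τ i + 0 + 0 = τ i by ring]
      exact le_trans (hjump i) hε'ε
end
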